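/- Let D be a digraph on vertex set V = {1,…,n}. There exist an integer q ≥ 2, a complete schedule σ and f ∈ F[D,q] such that f^σ is a permutation of [q]^n if and only if every vertex of D belongs to a cycle of D. -/

import Mathlib

open Function

/-- A `p`-walk in the digraph `D` on vertex set `Fin n`. -/
def IsPWalk {n : ℕ} (D : Fin n → Fin n → Prop) (p : ℕ) (w : Fin (p + 1) → Fin n) : Prop :=
  ∀ s : Fin p, D (w s.castSucc) (w s.succ)

/-- `alphaWalks D p` is the maximum number of pairwise independent `p`-walks in `D`. -/
noncomputable def alphaWalks {n : ℕ} (D : Fin n → Fin n → Prop) (p : ℕ) : ℕ :=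
  sSup {k : ℕ | ∃ W : Fin k → Fin (p + 1) → Fin n,
    (∀ i, IsPWalk D p (W i)) ∧ ∀ i j : Fin k, i ≠ j → ∀ s, W i s ≠ W j s}

/-- The interaction graph of an FDS: `(u,v)` is an arc iff `f_v` depends essentially on `x_u`. -/
def IG {n q : ℕ} (f : (Fin n → Fin q) → Fin n → Fin q) (u v : Fin n) : Prop :=
  ∃ x y : Fin n → Fin q, (∀ w : Fin n, w ≠ u → x w = y w) ∧ f x v ≠ f y v

/-- Membership in `F[D,q]`: the interaction graph of `f` equals `D`. -/
def ExactIG {n q : ℕ} (D : Fin n → Fin n → Prop) (f : (Fin n → Fin q) → Fin n → Fin q) : Prop :=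
  ∀ u v, IG f u v ↔ D u v

/-- Membership in `F(D,q)`: the interaction graph of `f` is contained in `D`. -/
def SubIG {n q : ℕ} (D : Fin n → Fin n → Prop) (f : (Fin n → Fin q) → Fin n → Fin q) : Prop :=
  ∀ u v, IG f u v → D u v

/-- A cycle of `D`, given by its list of (distinct) vertices, with arcs between consecutive
vertices, cyclically. A loop is a cycle with one vertex. -/
def IsCycleList {n : ℕ} (D : Fin n → Fin n → Prop) (c : List (Fin n)) : Prop :=
  c ≠ [] ∧ c.Nodup ∧
    ∀ i : Fin c.length, D (c.get i) (c.get ⟨((i : ℕ) + 1) % c.length, Nat.mod_lt _ i.pos⟩)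

/-- A path of `D`, given by its list of (distinct) vertices. -/
def IsPathList {n : ℕ} (D : Fin n → Fin n → Prop) (P : List (Fin n)) : Prop :=
  P.Nodup ∧ P.Chain' D

/-- `f^{(S)}`: update the coordinates in `S` only. -/
def applyBlock {n q : ℕ} (f : (Fin n → Fin q) → Fin n → Fin q) (S : Finset (Fin n))
    (x : Fin n → Fin q) : Fin n → Fin q :=
  fun v => if v ∈ S then f x v else x v

/-- `f^σ = f^{(σ_t)} ∘ ⋯ ∘ f^{(σ_1)}`. -/
def applySchedule {n q : ℕ} (f : (Fin n → Fin q) → Fin n → Fin q)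
    (σ : List (Finset (Fin n))) : (Fin n → Fin q) → Fin n → Fin q :=
  σ.foldl (fun g S => applyBlock f S ∘ g) id

/-- A block-sequential schedule: every vertex is updated exactly once. -/
def BlockSequential {n : ℕ} (σ : List (Finset (Fin n))) : Prop :=
  σ.Pairwise Disjoint ∧ ∀ v : Fin n, ∃ S ∈ σ, v ∈ S

/-- A complete schedule: every vertex is updated at least once. -/
def CompleteSchedule {n : ℕ} (σ : List (Finset (Fin n))) : Prop :=
  ∀ v : Fin n, ∃ S ∈ σ, v ∈ S

/-- `T(D)`: the number of trivial strong components of `D`, i.e. the number of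
vertices not lying on any cycle of `D`. -/
noncomputable def numTrivial {n : ℕ} (D : Fin n → Fin n → Prop) : ℕ :=
  Set.ncard {v : Fin n | ¬ ∃ c : List (Fin n), IsCycleList D c ∧ v ∈ c}

/-- All vertices of `D` can be covered by pairwise vertex-disjoint cycles. -/
def CoveredByDisjointCycles {n : ℕ} (D : Fin n → Fin n → Prop) : Prop :=
  ∃ Cs : List (List (Fin n)), (∀ c ∈ Cs, IsCycleList D c) ∧
    Cs.Pairwise (fun a b => ∀ v ∈ a, v ∉ b) ∧ ∀ v : Fin n, ∃ c ∈ Cs, v ∈ c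

section AuxAll


section Aux

variable {n q : ℕ} {f : (Fin n → Fin q) → Fin n → Fin q}

lemma foldl_comp (σ : List (Finset (Fin n))) (g : (Fin n → Fin q) → Fin n → Fin q) :
    σ.foldl (fun g S => applyBlock f S ∘ g) g = applySchedule f σ ∘ g := by
  induction σ generalizing g with
  | nil => simp [applySchedule]
  | cons S σ ih =>
      simp only [applySchedule, List.foldl_cons]
      rw [ih, ih (applyBlock f S ∘ id)]
      rfl

lemma applySchedule_cons (S : Finset (Fin n)) (σ : List (Finset (Fin n))) :
    applySchedule f (S :: σ) = applySchedule f σ ∘ applyBlock f S := by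
  simp only [applySchedule, List.foldl_cons]
  rw [foldl_comp]
  rfl

lemma bijective_applySchedule (σ : List (Finset (Fin n)))
    (h : ∀ S ∈ σ, Bijective (applyBlock f S)) : Bijective (applySchedule f σ) := by
  induction σ with
  | nil => simpa [applySchedule] using Function.bijective_id
  | cons S σ ih =>
      rw [applySchedule_cons]
      exact (ih (fun T hT => h T (List.mem_cons_of_mem _ hT))).comp (h S List.mem_cons_self)

lemma injective_block_of_schedule (σ : List (Finset (Fin n)))
    (h : Bijective (applySchedule f σ)) {S : Finset (Fin n)} (hS : S ∈ σ) :
    Injective (applyBlock f S) := by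
  induction σ with
  | nil => simp at hS
  | cons T σ ih =>
      rw [applySchedule_cons] at h
      have hT : Injective (applyBlock f T) := Function.Injective.of_comp h.1
      rcases List.mem_cons.1 hS with rfl | hS'
      · exact hT
      · have hsurj : Surjective (applySchedule f σ) := Function.Surjective.of_comp h.2
        exact ih ((Finite.surjective_iff_bijective).1 hsurj) hS'

lemma not_IG_iff {u v : Fin n} :
    ¬ IG f u v ↔ ∀ x y : Fin n → Fin q, (∀ w ≠ u, x w = y w) → f x v = f y v := by
  unfold IG
  push_neg
  rfl

lemma eq_of_agree_off {v : Fin n} (U : Finset (Fin n)) (hU : ∀ u ∈ U, ¬ IG f u v) :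
    ∀ x y : Fin n → Fin q, (∀ u, u ∉ U → x u = y u) → f x v = f y v := by
  classical
  induction U using Finset.induction_on with
  | empty => intro x y h; congr 1; funext u; exact h u (by simp)
  | @insert a U ha ih =>
      intro x y h
      have hnota : ¬ IG f a v := hU a (Finset.mem_insert_self _ _)
      have h1 : f x v = f (Function.update x a (y a)) v := by
        refine not_IG_iff.1 hnota x _ (fun w hw => ?_)
        rw [Function.update_of_ne hw]
      rw [h1]
      refine ih (fun u hu => hU u (Finset.mem_insert_of_mem hu)) _ _ (fun u hu => ?_)
      by_cases hua : u = a
      · subst hua; simp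
      · rw [Function.update_of_ne hua]
        exact h u (by simp [hu, hua])

end Aux


section Path
variable {α : Type*} {r : α → α → Prop}

lemma exists_nodup_path {a b : α} (h : Relation.ReflTransGen r a b) :
    ∃ l : List α, l.head? = some a ∧ l.getLast? = some b ∧ l.Chain' r ∧ l.Nodup := by
  classical
  induction h using Relation.ReflTransGen.head_induction_on with
  | refl => exact ⟨[b], rfl, rfl, List.isChain_singleton b, List.nodup_singleton b⟩
  | @head a c hac hcb ih =>
      obtain ⟨l, hhead, hlast, hchain, hnodup⟩ := ih
      by_cases hal : a ∈ l
      · obtain ⟨l₁, l₂, rfl⟩ := List.append_of_mem hal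
        refine ⟨a :: l₂, rfl, ?_, ?_, ?_⟩
        · rw [← hlast]
          have h2 : (a :: l₂) ≠ [] := List.cons_ne_nil _ _
          exact (List.getLast?_append_of_ne_nil (l₁ := l₁) h2).symm
        · exact hchain.suffix ⟨l₁, rfl⟩
        · exact hnodup.sublist (List.sublist_append_right l₁ (a :: l₂))
      · obtain ⟨c', t, rfl⟩ : ∃ c' t, l = c' :: t := by
          cases l with
          | nil => simp at hhead
          | cons c' t => exact ⟨c', t, rfl⟩
        have hc' : c' = c := by simpa using hhead
        subst hc'
        refine ⟨a :: c' :: t, rfl, ?_, ?_, ?_⟩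
        · rw [List.getLast?_cons_cons]; exact hlast
        · exact List.isChain_cons.2 ⟨fun y hy => by simp at hy; subst hy; exact hac, hchain⟩
        · exact List.nodup_cons.2 ⟨hal, hnodup⟩

end Path

section Cyc
variable {n : ℕ} {D : Fin n → Fin n → Prop}

lemma isCycleList_of_chain' {c : List (Fin n)} (hne : c ≠ []) (hnd : c.Nodup)
    (hch : c.Chain' D) (hwrap : D (c.getLast hne) (c.head hne)) : IsCycleList D c := by
  refine ⟨hne, hnd, fun i => ?_⟩
  have hlen : 0 < c.length := List.length_pos_iff.2 hne
  by_cases hi : (i : ℕ) + 1 < c.length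
  · have hmod : ((i : ℕ) + 1) % c.length = (i : ℕ) + 1 := Nat.mod_eq_of_lt hi
    have := (List.isChain_iff_getElem.1 hch) i (by omega)
    simpa [hmod] using this
  · have hi1 : (i : ℕ) + 1 = c.length := by omega
    have hmod : ((i : ℕ) + 1) % c.length = 0 := by rw [hi1, Nat.mod_self]
    have hgetlast : c.get i = c.getLast hne := by
      rw [List.getLast_eq_getElem, List.get_eq_getElem]
      congr 1
      exact (show (i:ℕ) = c.length - 1 by omega)
    have hhead : c.get ⟨((i : ℕ) + 1) % c.length, Nat.mod_lt _ i.pos⟩ = c.head hne := by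
      rw [← List.get_mk_zero hlen]
      congr 1
      exact Fin.ext (by simpa using hmod)
    rw [hgetlast, hhead]
    exact hwrap

lemma cycle_of_transGen {R : Fin n → Fin n → Prop} (hRD : ∀ a b, R a b → D a b) {v : Fin n}
    (h : Relation.TransGen R v v) : ∃ c : List (Fin n), IsCycleList D c ∧ v ∈ c := by
  obtain ⟨w, hvw, hwv⟩ := Relation.TransGen.head'_iff.1 h
  obtain ⟨l, hhead, hlast, hchain, hnodup⟩ := exists_nodup_path hwv
  have hlne : l ≠ [] := by intro h'; subst h'; simp at hhead
  have hlastv : l.getLast hlne = v := by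
    rwa [List.getLast?_eq_getLast hlne, Option.some_inj] at hlast
  have hsplit : l.dropLast ++ [v] = l := by rw [← hlastv]; exact List.dropLast_append_getLast hlne
  set dL := l.dropLast with hdL
  have hnodup' : dL.Nodup ∧ v ∉ dL := by
    rw [← hsplit] at hnodup
    have := List.nodup_append.1 hnodup
    exact ⟨this.1, fun hv => this.2.2 v hv v (by simp) rfl⟩
  refine ⟨v :: dL, ?_, List.mem_cons_self⟩
  have hne : (v :: dL) ≠ [] := List.cons_ne_nil _ _
  refine isCycleList_of_chain' hne (List.nodup_cons.2 ⟨hnodup'.2, hnodup'.1⟩) ?_ ?_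
  · refine List.isChain_cons.2 ⟨?_, ?_⟩
    · intro y hy
      have hdLne : dL ≠ [] := by intro h'; rw [h'] at hy; simp at hy
      have : l.head? = some y := by
        rw [← hsplit, List.head?_append_of_ne_nil _ hdLne]
        exact hy
      have : y = w := by rw [hhead] at this; exact (Option.some_inj.1 this).symm
      subst this
      exact hRD _ _ hvw
    · refine (hchain.prefix ?_).imp hRD
      exact ⟨[v], hsplit⟩
  · by_cases hdLne : dL = []
    · -- l = [v], so w = v and R v v
      have : l = [v] := by rw [← hsplit, hdLne]; rfl
      have hw : w = v := by rw [this] at hhead; simpa using hhead.symm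
      have : (v :: dL).getLast hne = v := by simp [hdLne]
      rw [this]
      simp only [hdLne]
      exact hRD _ _ (hw ▸ hvw)
    · have h1 : (v :: dL).getLast hne = dL.getLast hdLne := List.getLast_cons hdLne
      have h2 : (v :: dL).head hne = v := rfl
      rw [h1, h2]
      have := List.isChain_append.1 (hsplit ▸ hchain)
      have harc := this.2.2 (dL.getLast hdLne) (by rw [List.getLast?_eq_getLast hdLne]; rfl) v rfl
      exact hRD _ _ harc

end Cyc


lemma rot_val {l : ℕ} (j : Fin l) : ((finRotate l j : ℕ)) = ((j : ℕ) + 1) % l := by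
  cases l with
  | zero => exact absurd j.2 (by omega)
  | succ m =>
      rw [finRotate_succ_apply, Fin.val_add]
      simp [Fin.val_one']

lemma cycle_perm {n : ℕ} {D : Fin n → Fin n → Prop} {c : List (Fin n)} (hc : IsCycleList D c) :
    ∃ τ : Equiv.Perm (Fin n), (∀ v, v ∈ c → D (τ v) v) ∧ (∀ v, v ∉ c → τ v = v) := by
  classical
  obtain ⟨hne, hnd, harc⟩ := hc
  have hinj : Function.Injective c.get := List.nodup_iff_injective_get.1 hnd
  set emb : Fin c.length ↪ Fin n := ⟨c.get, hinj⟩ with hemb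
  set ρ : Equiv.Perm (Fin c.length) := (finRotate c.length).symm with hρ
  set τ : Equiv.Perm (Fin n) := ρ.viaFintypeEmbedding emb with hτ
  have hkey : ∀ i : Fin c.length, (((ρ i : ℕ)) + 1) % c.length = (i : ℕ) := by
    intro i
    have := rot_val (ρ i)
    rw [hρ, Equiv.apply_symm_apply] at this
    rw [← hρ] at this
    omega
  refine ⟨τ, ?_, ?_⟩
  · intro v hv
    obtain ⟨i, hi⟩ := List.mem_iff_get.1 hv
    subst hi
    have himg : τ (emb i) = emb (ρ i) := Equiv.Perm.viaFintypeEmbedding_apply_image ρ emb i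
    have : τ (c.get i) = c.get (ρ i) := himg
    rw [this]
    have := harc (ρ i)
    convert this using 2
    exact (Fin.ext (hkey i)).symm
  · intro v hv
    apply Equiv.Perm.viaFintypeEmbedding_apply_notMem_range
    rintro ⟨i, rfl⟩
    exact hv (List.get_mem c i)


noncomputable def blockMat {n : ℕ} {R : Type*} [Semiring R] (co : Fin n → Fin n → R)
    (S : Finset (Fin n)) : Matrix (Fin n) (Fin n) R :=
  Matrix.of fun v u => if v ∈ S then co u v else if v = u then 1 else 0

lemma exists_good_coeffs {n : ℕ} (D : Fin n → Fin n → Prop) (cl : Fin n → List (Fin n))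
    (hcl : ∀ w, IsCycleList D (cl w)) :
    ∃ (cInt : Fin n → Fin n → ℤ) (big : ℤ), big ≠ 0 ∧
      (∀ u v, ¬ D u v → cInt u v = 0) ∧ (∀ u v, D u v → cInt u v ∣ big) ∧
      (∀ w, (blockMat cInt ((cl w).toFinset)).det ∣ big) := by
  classical
  set genM : Finset (Fin n) → Matrix (Fin n) (Fin n) (MvPolynomial (Fin n × Fin n) ℤ) :=
    fun S => Matrix.of fun v u =>
      if v ∈ S then (if D u v then MvPolynomial.X (u, v) else 0)
      else if v = u then 1 else 0 with hgenM
  have hdet : ∀ w, (genM ((cl w).toFinset)).det ≠ 0 := by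
    intro w
    obtain ⟨τ, hτ1, hτ2⟩ := cycle_perm (hcl w)
    set φ : Fin n × Fin n → ℤ := fun p => if p.2 ∈ cl w ∧ τ p.2 = p.1 then 1 else 0 with hφ
    have hmap : (genM ((cl w).toFinset)).map (MvPolynomial.eval φ) = τ.permMatrix ℤ := by
      ext v u
      simp only [Matrix.map_apply, Matrix.of_apply, hgenM, Equiv.Perm.permMatrix,
        PEquiv.toMatrix_apply, Equiv.toPEquiv_apply, Option.mem_def, Option.some_inj]
      by_cases hv : v ∈ (cl w).toFinset
      · have hv' : v ∈ cl w := List.mem_toFinset.1 hv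
        rw [if_pos hv]
        by_cases hu : τ v = u
        · have hD : D u v := hu ▸ hτ1 v hv'
          rw [if_pos hD, if_pos hu]
          simp [hφ, hv', hu]
        · rw [if_neg hu]
          by_cases hD : D u v
          · rw [if_pos hD]
            simp [hφ, hu]
          · simp [hD]
      · have hv' : v ∉ cl w := fun h => hv (List.mem_toFinset.2 h)
        rw [if_neg hv, hτ2 v hv']
        by_cases hvu : v = u <;> simp [hvu]
    intro h0
    have := (MvPolynomial.eval φ).map_det (genM ((cl w).toFinset))
    rw [h0, map_zero, RingHom.mapMatrix_apply, hmap, Matrix.det_permutation] at this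
    exact (Units.ne_zero _) this.symm
  set arcs : Finset (Fin n × Fin n) := Finset.univ.filter (fun p => D p.1 p.2) with harcs
  set P : MvPolynomial (Fin n × Fin n) ℤ :=
    (∏ w : Fin n, (genM ((cl w).toFinset)).det) * ∏ p ∈ arcs, MvPolynomial.X p with hP
  have hPne : P ≠ 0 :=
    mul_ne_zero (Finset.prod_ne_zero_iff.2 fun w _ => hdet w)
      (Finset.prod_ne_zero_iff.2 fun p _ => MvPolynomial.X_ne_zero p)
  have hz : ∃ z : Fin n × Fin n → ℤ, MvPolynomial.eval z P ≠ 0 := by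
    by_contra h
    push_neg at h
    exact hPne (MvPolynomial.funext (fun x => by rw [h x, map_zero]))
  obtain ⟨z, hzP⟩ := hz
  set cInt : Fin n → Fin n → ℤ := fun u v => if D u v then z (u, v) else 0 with hcInt
  have hmapz : ∀ S, (genM S).map (MvPolynomial.eval z) = blockMat cInt S := by
    intro S
    ext v u
    simp only [Matrix.map_apply, Matrix.of_apply, hgenM, blockMat, hcInt]
    split_ifs <;> simp
  have hbig : MvPolynomial.eval z P =
      (∏ w : Fin n, (blockMat cInt ((cl w).toFinset)).det) * ∏ p ∈ arcs, z p := by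
    rw [hP, map_mul, map_prod, map_prod]
    congr 1
    · exact Finset.prod_congr rfl fun w _ => by
        rw [← hmapz, (MvPolynomial.eval z).map_det, RingHom.mapMatrix_apply]
    · exact Finset.prod_congr rfl fun p _ => MvPolynomial.eval_X _
  refine ⟨cInt, MvPolynomial.eval z P, hzP, ?_, ?_, ?_⟩
  · intro u v hD; simp [hcInt, hD]
  · intro u v hD
    rw [hbig, hcInt]
    simp only [if_pos hD]
    exact dvd_mul_of_dvd_right
      (Finset.dvd_prod_of_mem _ (by simp [harcs, hD])) _
  · intro w
    rw [hbig]
    exact dvd_mul_of_dvd_left (Finset.dvd_prod_of_mem _ (Finset.mem_univ w)) _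


lemma forward_dir {n q : ℕ} (hn : 1 ≤ n) (hq : 2 ≤ q) {D : Fin n → Fin n → Prop}
    {f : (Fin n → Fin q) → Fin n → Fin q} (hf : ExactIG D f) {S : Finset (Fin n)}
    (hinj : Injective (applyBlock f S)) {v : Fin n} (hvS : v ∈ S) :
    ∃ c : List (Fin n), IsCycleList D c ∧ v ∈ c := by
  classical
  by_contra hno
  set R : Fin n → Fin n → Prop := fun a b => D a b ∧ a ∈ S ∧ b ∈ S with hR
  set A : Finset (Fin n) :=
    Finset.univ.filter (fun u => u ∈ S ∧ Relation.ReflTransGen R u v) with hA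
  have hvA : v ∈ A := by
    rw [hA, Finset.mem_filter]
    exact ⟨Finset.mem_univ _, hvS, Relation.ReflTransGen.refl⟩
  have hAS : ∀ u ∈ A, u ∈ S ∧ Relation.ReflTransGen R u v := by
    intro u hu; rw [hA, Finset.mem_filter] at hu; exact hu.2
  set B : Finset (Fin n) := A.erase v with hB
  set W : Finset (Fin n) := S \ B with hW
  have hvW : v ∈ W := Finset.mem_sdiff.2 ⟨hvS, fun h => (Finset.mem_erase.1 h).1 rfl⟩
  have key1 : ∀ w ∈ A, ∀ u ∈ W, ¬ IG f u w := by
    intro w hw u huW hIG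
    have hD : D u w := (hf u w).1 hIG
    obtain ⟨huS, hunB⟩ := Finset.mem_sdiff.1 huW
    obtain ⟨hwS, hwv⟩ := hAS w hw
    have hRuw : R u w := ⟨hD, huS, hwS⟩
    have huv : Relation.ReflTransGen R u v := Relation.ReflTransGen.head hRuw hwv
    have huA : u ∈ A := by rw [hA, Finset.mem_filter]; exact ⟨Finset.mem_univ _, huS, huv⟩
    have huveq : u = v := by
      by_contra hne
      exact hunB (Finset.mem_erase.2 ⟨hne, huA⟩)
    subst huveq
    exact hno (cycle_of_transGen (fun a b h => h.1) (Relation.TransGen.head' hRuw hwv))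
  have key2 : ∀ w ∈ A, ∀ x y : Fin n → Fin q, (∀ u, u ∉ W → x u = y u) → f x w = f y w :=
    fun w hw => eq_of_agree_off W (fun u hu => key1 w hw u hu)
  set Ψ : (Fin n → Fin q) → ({u // u ∈ Wᶜ} → Fin q) × ({u // u ∈ W.erase v} → Fin q) :=
    fun x => (fun u => x u.1, fun u => applyBlock f S x u.1) with hΨdef
  have hΨ : Injective Ψ := by
    intro x y h
    rw [Prod.ext_iff] at h
    obtain ⟨h1, h2⟩ := h
    have hagree : ∀ u, u ∉ W → x u = y u := by
      intro u hu
      exact congrFun h1 ⟨u, Finset.mem_compl.2 hu⟩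
    apply hinj
    funext w
    by_cases hwS : w ∈ S
    · by_cases hwA : w ∈ A
      · show applyBlock f S x w = applyBlock f S y w
        simp only [applyBlock, if_pos hwS]
        exact key2 w hwA x y hagree
      · have hwW : w ∈ W := Finset.mem_sdiff.2 ⟨hwS, fun hb => hwA (Finset.mem_of_mem_erase hb)⟩
        have hwv : w ≠ v := fun e => hwA (e ▸ hvA)
        exact congrFun h2 ⟨w, Finset.mem_erase.2 ⟨hwv, hwW⟩⟩
    · show applyBlock f S x w = applyBlock f S y w
      simp only [applyBlock, if_neg hwS]
      exact hagree w (fun hw' => hwS (Finset.mem_sdiff.1 hw').1)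
  have hcard := Fintype.card_le_of_injective Ψ hΨ
  rw [Fintype.card_prod, Fintype.card_fun, Fintype.card_fun, Fintype.card_fun,
    Fintype.card_coe, Fintype.card_coe, Fintype.card_fin, Fintype.card_fin,
    Finset.card_compl, Finset.card_erase_of_mem hvW, Fintype.card_fin] at hcard
  have h1W : 1 ≤ W.card := Finset.card_pos.2 ⟨v, hvW⟩
  have hWn : W.card ≤ n := le_trans (Finset.card_le_univ W) (by simp)
  rw [← pow_add] at hcard
  have heq : n - W.card + (W.card - 1) = n - 1 := by omega
  rw [heq] at hcard
  have : q ^ (n - 1) < q ^ n := Nat.pow_lt_pow_right (by omega) (by omega)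
  omega


lemma backward_dir {n : ℕ} (D : Fin n → Fin n → Prop)
    (hcyc : ∀ v, ∃ c, IsCycleList D c ∧ v ∈ c) :
    ∃ (q : ℕ), 2 ≤ q ∧
      ∃ (f : (Fin n → Fin q) → Fin n → Fin q) (σ : List (Finset (Fin n))),
        ExactIG D f ∧ CompleteSchedule σ ∧ Function.Bijective (applySchedule f σ) := by
  classical
  choose cl hcl hmem using hcyc
  obtain ⟨cInt, big, hbig0, hc0, hcdvd, hdetdvd⟩ := exists_good_coeffs D cl hcl
  obtain ⟨p, hpge, hp⟩ := Nat.exists_infinite_primes (big.natAbs + 1)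
  haveI : Fact p.Prime := ⟨hp⟩
  have hp2 : 2 ≤ p := hp.two_le
  haveI : NeZero p := ⟨by omega⟩
  have hpnd : ¬ ((p : ℤ) ∣ big) := by
    intro hdvd
    have h1 : (p : ℤ).natAbs ∣ big.natAbs := Int.natAbs_dvd_natAbs.2 hdvd
    rw [Int.natAbs_natCast] at h1
    have := Nat.le_of_dvd (Int.natAbs_pos.2 hbig0) h1
    omega
  have hcast : ∀ x : ℤ, x ∣ big → ((x : ZMod p) ≠ 0) := by
    intro x hx h0
    rw [ZMod.intCast_zmod_eq_zero_iff_dvd] at h0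
    exact hpnd (h0.trans hx)
  set co : Fin n → Fin n → ZMod p := fun u v => ((cInt u v : ℤ) : ZMod p) with hco
  have hcoD : ∀ u v, D u v → co u v ≠ 0 := fun u v h => hcast _ (hcdvd u v h)
  have hcoN : ∀ u v, ¬ D u v → co u v = 0 := fun u v h => by simp [hco, hc0 u v h]
  have hmapmat : ∀ S, blockMat co S = (blockMat cInt S).map (Int.cast : ℤ → ZMod p) := by
    intro S
    ext v u
    simp only [blockMat, Matrix.map_apply, Matrix.of_apply, hco]
    split_ifs <;> simp
  have hdet : ∀ w, (blockMat co ((cl w).toFinset)).det ≠ 0 := by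
    intro w
    rw [hmapmat]
    have h1 := (Int.castRingHom (ZMod p)).map_det (blockMat cInt ((cl w).toFinset))
    rw [RingHom.mapMatrix_apply, Int.coe_castRingHom] at h1
    rw [← h1]
    exact hcast _ (hdetdvd w)
  set e : Fin p ≃ ZMod p := Fintype.equivOfCardEq (by simp) with he
  set f : (Fin n → Fin p) → Fin n → Fin p :=
    fun x v => e.symm (∑ u, co u v * e (x u)) with hf
  set σ : List (Finset (Fin n)) := (List.finRange n).map (fun w => (cl w).toFinset) with hσ
  refine ⟨p, hp2, f, σ, ?_, ?_, ?_⟩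
  · intro u v
    constructor
    · rintro ⟨x, y, hagree, hne⟩
      by_contra hD
      apply hne
      simp only [hf]
      congr 1
      apply Finset.sum_congr rfl
      intro w _
      by_cases hwu : w = u
      · subst hwu
        rw [hcoN w v (by exact hD)]
        ring
      · rw [hagree w hwu]
    · intro hD
      refine ⟨fun _ => e.symm 0, Function.update (fun _ => e.symm 0) u (e.symm 1),
        fun w hw => (Function.update_of_ne hw (e.symm 1) (fun _ => e.symm 0)).symm, ?_⟩
      have h1 : f (fun _ => e.symm 0) v = e.symm 0 := by simp [hf]
      have h2 : f (Function.update (fun _ => e.symm 0) u (e.symm 1)) v = e.symm (co u v) := by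
        simp only [hf]
        congr 1
        rw [Fintype.sum_eq_single u]
        · simp
        · intro w hw
          rw [Function.update_of_ne hw]
          simp
      rw [h1, h2]
      intro heq
      exact hcoD u v hD (e.symm.injective heq).symm
  · intro v
    exact ⟨(cl v).toFinset, List.mem_map.2 ⟨v, List.mem_finRange v, rfl⟩,
      List.mem_toFinset.2 (hmem v)⟩
  · apply bijective_applySchedule
    intro S hS
    obtain ⟨w, -, rfl⟩ := List.mem_map.1 hS
    set E : (Fin n → Fin p) ≃ (Fin n → ZMod p) :=
      ⟨fun x u => e (x u), fun y u => e.symm (y u),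
        fun x => by funext u; simp, fun y => by funext u; simp⟩ with hE
    have hMbij : Bijective ((blockMat co ((cl w).toFinset)).mulVec) := by
      rw [← Finite.injective_iff_bijective]
      exact Matrix.mulVec_injective_iff_isUnit.2
        ((Matrix.isUnit_iff_isUnit_det _).2 (isUnit_iff_ne_zero.2 (hdet w)))
    have heq : applyBlock f ((cl w).toFinset)
        = E.symm ∘ ((blockMat co ((cl w).toFinset)).mulVec) ∘ E := by
      funext x v
      show applyBlock f ((cl w).toFinset) x v
        = e.symm (((blockMat co ((cl w).toFinset)).mulVec (fun u => e (x u))) v)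
      simp only [applyBlock, Matrix.mulVec, dotProduct, blockMat, Matrix.of_apply]
      by_cases hv : v ∈ (cl w).toFinset
      · rw [if_pos hv]
        simp only [hf, if_pos hv]
      · rw [if_neg hv]
        simp only [if_neg hv, ite_mul, one_mul, zero_mul]
        rw [Finset.sum_ite_eq (Finset.univ) v (fun u => e (x u))]
        simp
    rw [heq]
    exact E.symm.bijective.comp (hMbij.comp E.bijective)

end AuxAll

/-- there exist `q ≥ 2`, a complete schedule `σ` and `f ∈ F[D,q]` such that
`f^σ` is a permutation of `[q]^n` iff every vertex of `D` belongs to a cycle of `D`. -/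
theorem permutation_complete_schedule {n : ℕ} (hn : 1 ≤ n) (D : Fin n → Fin n → Prop) :
    (∃ (q : ℕ), 2 ≤ q ∧
        ∃ (f : (Fin n → Fin q) → Fin n → Fin q) (σ : List (Finset (Fin n))),
          ExactIG D f ∧ CompleteSchedule σ ∧ Function.Bijective (applySchedule f σ)) ↔
      ∀ v : Fin n, ∃ c : List (Fin n), IsCycleList D c ∧ v ∈ c := by
  constructor
  · rintro ⟨q, hq, f, σ, hf, hσ, hbij⟩ v
    obtain ⟨S, hSσ, hvS⟩ := hσ v
    exact forward_dir hn hq hf (injective_block_of_schedule σ hbij hSσ) hvS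
  · exact backward_dir D
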